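/- arXiv:1808.07050 — 2 statements merged into one kernel-verified Lean document; each statement's English description precedes it below -/
import Mathlib

section
/- Consider the program P with rules: fact p(a), and 'p(b) ← card{X:p(X)} > 0'. Under the aggregate-reduct semantics (reduct w.r.t. S deletes the second rule if |{t : p(t)∈S}| = 0, otherwise replaces its body by {p(t) : p(t) ∈ S}; S is an answer set iff S is the least model of the reduct), P has no answer set: neither {p(a)} nor {p(a),p(b)} (nor any other subset of {p(a),p(b)}) is an answer set. -/
/-- Models and least models of ground definite programs. -/
def IsModel {α : Type*} (P : Set (α × Set α)) (A : Set α) : Prop :=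
  ∀ r ∈ P, r.2 ⊆ A → r.1 ∈ A

def IsLeastModel {α : Type*} (P : Set (α × Set α)) (A : Set α) : Prop :=
  IsModel P A ∧ ∀ M : Set α, IsModel P M → A ⊆ M

/-- Atoms: `false` = p(a), `true` = p(b).  Reduct of the program
`{p(a)., p(b) ← card{X:p(X)} > 0}` w.r.t. S : the fact p(a) stays; the second rule
is deleted if S = ∅ and otherwise becomes `p(b) ← (all atoms of S)`. -/
def reduct (S : Set Bool) : Set (Bool × Set Bool) :=
  {r | r = (false, (∅ : Set Bool))} ∪ {r | S.Nonempty ∧ r = (true, S)}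

def AnswerSet (S : Set Bool) : Prop := IsLeastModel (reduct S) S

theorem no_answer_set :
    (∀ S : Set Bool, ¬ AnswerSet S) ∧
    ¬ AnswerSet {false} ∧ ¬ AnswerSet {false, true} := by
  have main : ∀ S : Set Bool, ¬ AnswerSet S := by
    intro S h
    obtain ⟨hmod, hleast⟩ := h
    have hfalse : false ∈ S := hmod (false, ∅) (Or.inl rfl) (Set.empty_subset S)
    have hne : S.Nonempty := ⟨false, hfalse⟩
    have htrue : true ∈ S := hmod (true, S) (Or.inr ⟨hne, rfl⟩) (subset_refl S)
    have hM : IsModel (reduct S) ({false} : Set Bool) := by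
      intro r hr hsub
      rcases hr with hr | ⟨_, hr⟩
      · subst hr; exact rfl
      · subst hr
        have : (true : Bool) ∈ ({false} : Set Bool) := hsub htrue
        simp at this
    have : (true : Bool) ∈ ({false} : Set Bool) := hleast _ hM htrue
    simp at this
  exact ⟨main, main _, main _⟩
end

section
/- Splitting for aggregate-free programs with possibly infinite bodies: Let Π₁ and Π₂ be ground definite programs (rules with one head atom and a set of body atoms, bodies possibly infinite), and let U be a set of atoms such that every atom occurring (in head or body) in Π₁ belongs to U, and no head atom of Π₂ belongs to U. Then A is the least model of Π₁ ∪ Π₂ if and only if A ∩ U is the least model of Π₁ and A is the least model of the program (A ∩ U) ∪ Π₂, where (A ∩ U) is added as a set of facts. -/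
/-- Splitting set theorem for definite programs. -/
theorem splitting {α : Type*} (P1 P2 : Set (α × Set α)) (U : Set α)
    (h₁ : ∀ r ∈ P1, r.1 ∈ U ∧ r.2 ⊆ U)
    (h₂ : ∀ r ∈ P2, r.1 ∉ U) (A : Set α) :
    IsLeastModel (P1 ∪ P2) A ↔
      IsLeastModel P1 (A ∩ U) ∧
      IsLeastModel ({r : α × Set α | r.1 ∈ A ∩ U ∧ r.2 = ∅} ∪ P2) A := by
  constructor
  · rintro ⟨hA, hleast⟩
    refine ⟨⟨?_, ?_⟩, ?_, ?_⟩
    · intro r hr hb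
      exact ⟨hA r (Or.inl hr) (hb.trans Set.inter_subset_left), (h₁ r hr).1⟩
    · intro M hM
      have hM' : IsModel (P1 ∪ P2) ((M ∩ (A ∩ U)) ∪ (A \ U)) := by
        rintro r (hr | hr) hb
        · have hbU : r.2 ⊆ U := (h₁ r hr).2
          have hbM : r.2 ⊆ M ∩ (A ∩ U) := by
            intro x hx
            rcases hb hx with h | h
            · exact h
            · exact absurd (hbU hx) h.2
          exact Or.inl ⟨hM r hr (hbM.trans Set.inter_subset_left),
            hA r (Or.inl hr)
              ((hbM.trans Set.inter_subset_right).trans Set.inter_subset_left),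
            (h₁ r hr).1⟩
        · have hbA : r.2 ⊆ A := by
            intro x hx
            rcases hb hx with h | h
            · exact h.2.1
            · exact h.1
          exact Or.inr ⟨hA r (Or.inr hr) hbA, h₂ r hr⟩
      intro x hx
      rcases hleast _ hM' hx.1 with h | h
      · exact h.1
      · exact absurd hx.2 h.2
    · rintro r (hr | hr) hb
      · exact hr.1.1
      · exact hA r (Or.inr hr) hb
    · intro M hM
      have hM' : IsModel (P1 ∪ P2) (M ∩ A) := by
        rintro r (hr | hr) hb
        · have hhA : r.1 ∈ A := hA r (Or.inl hr) (hb.trans Set.inter_subset_right)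
          have hf : (r.1, (∅ : Set α)) ∈
              ({r : α × Set α | r.1 ∈ A ∩ U ∧ r.2 = ∅} ∪ P2) :=
            Or.inl ⟨⟨hhA, (h₁ r hr).1⟩, rfl⟩
          exact ⟨hM (r.1, (∅ : Set α)) hf (Set.empty_subset M), hhA⟩
        · exact ⟨hM r (Or.inr hr) (hb.trans Set.inter_subset_left),
            hA r (Or.inr hr) (hb.trans Set.inter_subset_right)⟩
      exact fun x hx => (hleast _ hM' hx).1
  · rintro ⟨⟨hB, hBleast⟩, hQ, hQleast⟩
    constructor
    · rintro r (hr | hr) hb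
      · exact (hB r hr fun x hx => ⟨hb hx, (h₁ r hr).2 hx⟩).1
      · exact hQ r (Or.inr hr) hb
    · intro M hM
      have h1 : A ∩ U ⊆ M := hBleast M fun r hr hb => hM r (Or.inl hr) hb
      apply hQleast
      rintro r (hr | hr) hb
      · exact h1 hr.1
      · exact hM r (Or.inr hr) hb
end
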